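/- Let κ > 2 + 2ν/(2−ν) for some ν ∈ (0,2), choose β with 2ν/(2−ν) < β < κ − 2, and let α ∈ (0,1). Suppose a sequence (a_n) satisfies a₀ ≥ α and a_{n+1} ≥ C · C_e · α^{βκ^n} · a_n² · μ^n for all n, where C, C_e > 0 and μ > 0 are constants. Then, provided α is small enough (depending on C, C_e, μ, β, κ), one has a_n ≥ α^{κ^n} for all n ≥ 0. -/

import Mathlib

open Real

lemma nat_succ_le_two_pow (n : ℕ) : (n : ℝ) + 1 ≤ 2 ^ n := by
  induction n with
  | zero => norm_num
  | succ n ih =>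
    push_cast
    have : (0:ℝ) < 2 ^ n := by positivity
    calc (n:ℝ) + 1 + 1 ≤ 2 ^ n + 2 ^ n := by nlinarith
      _ = 2 ^ (n+1) := by ring

/-- Non-cutoff induction: for `κ > 2 + 2ν/(2−ν)`, `2ν/(2−ν) < β < κ−2`, and positive
constants `C`, `C_e`, `μ`, there is `α₀ > 0` such that for every `α ∈ (0, α₀] ∩ (0,1)`
and every sequence with `a₀ ≥ α` and `a_{n+1} ≥ C C_e α^{βκ^n} a_n² μ^n`, one has
`a_n ≥ α^{κ^n}` for all `n`. -/
theorem noncutoff_induction (ν κ β C Ce μ : ℝ) (hν : ν ∈ Set.Ioo (0 : ℝ) 2)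
    (hκ : 2 + 2 * ν / (2 - ν) < κ) (hβ1 : 2 * ν / (2 - ν) < β) (hβ2 : β < κ - 2)
    (hC : 0 < C) (hCe : 0 < Ce) (hμ : 0 < μ) :
    ∃ α₀ : ℝ, 0 < α₀ ∧ ∀ α : ℝ, 0 < α → α ≤ α₀ → α < 1 →
      ∀ a : ℕ → ℝ, α ≤ a 0 →
        (∀ n : ℕ, C * Ce * α ^ (β * κ ^ n) * a n ^ 2 * μ ^ n ≤ a (n + 1)) →
        ∀ n : ℕ, α ^ (κ ^ n) ≤ a n := by
  obtain ⟨hν0, hν2⟩ := hν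
  have hfrac : 0 < 2 * ν / (2 - ν) := by
    apply div_pos <;> linarith
  have hδ : 0 < κ - 2 - β := by linarith
  have hβ0 : 0 < β := lt_trans hfrac hβ1
  have hκ2 : (2:ℝ) ≤ κ := by linarith
  have hκ0 : (0:ℝ) < κ := by linarith
  set δ := κ - 2 - β with hδdef
  set m := min 1 (min (C * Ce) μ) with hm
  have hm0 : 0 < m := lt_min one_pos (lt_min (by positivity) hμ)
  have hm1 : m ≤ 1 := min_le_left _ _
  refine ⟨m ^ (1/δ), Real.rpow_pos_of_pos hm0 _, ?_⟩
  intro α hα0 hαle hα1 a ha0 hrec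
  have hαδ : α ^ δ ≤ m := by
    have h := Real.rpow_le_rpow hα0.le hαle hδ.le
    rwa [← Real.rpow_mul hm0.le, one_div, inv_mul_cancel₀ hδ.ne',
      Real.rpow_one] at h
  intro n
  induction n with
  | zero => simpa using ha0
  | succ n ih =>
    have hκn0 : (0:ℝ) < κ ^ n := pow_pos hκ0 n
    have hpos : 0 < α ^ (κ ^ n) := Real.rpow_pos_of_pos hα0 _
    have han : 0 < a n := lt_of_lt_of_le hpos ih
    -- key: α ^ (δ * κ ^ n) ≤ C * Ce * μ ^ n
    have hαδ1 : α ^ δ ≤ 1 := le_trans hαδ hm1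
    have hαδ0 : 0 < α ^ δ := Real.rpow_pos_of_pos hα0 _
    have hexp : (n:ℝ) + 1 ≤ κ ^ n := by
      calc (n:ℝ) + 1 ≤ 2 ^ n := nat_succ_le_two_pow n
        _ ≤ κ ^ n := pow_le_pow_left₀ (by norm_num) hκ2 n
    have hkey : α ^ (δ * κ ^ n) ≤ C * Ce * μ ^ n := by
      have h1 : α ^ (δ * κ ^ n) = (α ^ δ) ^ (κ ^ n) := Real.rpow_mul hα0.le _ _
      have h2 : (α ^ δ) ^ (κ ^ n) ≤ (α ^ δ) ^ ((n:ℝ) + 1) :=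
        Real.rpow_le_rpow_of_exponent_ge hαδ0 hαδ1 hexp
      have h3 : (α ^ δ) ^ ((n:ℝ) + 1) = (α ^ δ) ^ (n + 1) := by
        rw [← Real.rpow_natCast (α ^ δ) (n+1)]; push_cast; ring_nf
      have h4 : (α ^ δ) ^ (n + 1) ≤ C * Ce * μ ^ n := by
        calc (α ^ δ) ^ (n + 1) ≤ m ^ (n + 1) :=
              pow_le_pow_left₀ hαδ0.le hαδ _
          _ = m * m ^ n := by ring
          _ ≤ (C * Ce) * μ ^ n := by
              apply mul_le_mul (le_trans (min_le_right _ _) (min_le_left _ _))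
                (pow_le_pow_left₀ hm0.le (le_trans (min_le_right _ _) (min_le_right _ _)) n)
                (by positivity) (by positivity)
      rw [h1]; exact le_trans h2 (le_trans (le_of_eq h3) h4)
    have hsplit : α ^ (κ ^ (n+1)) =
        α ^ (δ * κ ^ n) * (α ^ (β * κ ^ n) * (α ^ (κ ^ n)) ^ 2) := by
      rw [← Real.rpow_natCast (α ^ (κ ^ n)) 2, ← Real.rpow_mul hα0.le,
        ← Real.rpow_add hα0, ← Real.rpow_add hα0]
      congr 1
      push_cast
      rw [pow_succ]
      ring_nf
      rw [hδdef]; ring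
    calc α ^ (κ ^ (n+1)) = α ^ (δ * κ ^ n) * (α ^ (β * κ ^ n) * (α ^ (κ ^ n)) ^ 2) := hsplit
      _ ≤ (C * Ce * μ ^ n) * (α ^ (β * κ ^ n) * (a n) ^ 2) := by
          apply mul_le_mul hkey
          · apply mul_le_mul_of_nonneg_left _ (Real.rpow_pos_of_pos hα0 _).le
            exact pow_le_pow_left₀ hpos.le ih 2
          · positivity
          · positivity
      _ = C * Ce * α ^ (β * κ ^ n) * a n ^ 2 * μ ^ n := by ring
      _ ≤ a (n + 1) := hrec n
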